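/- If P is a 4-dimensional subspace of ℝ⁷ on which the standard G₂ 3-form φ₀ vanishes identically (a coassociative 4-plane), then the restriction of *φ₀ to P is a nonvanishing 4-form on P; in particular *φ₀|_P induces an orientation on P. -/

import Mathlib

open scoped BigOperators

/-- `E n` is Euclidean space `ℝⁿ`. -/
abbrev E (n : ℕ) := EuclideanSpace ℝ (Fin n)

/-- A (constant-coefficient) `k`-form on `ℝⁿ`: an alternating `k`-linear map to `ℝ`. -/
abbrev Form (n k : ℕ) := (E n) [⋀^Fin k]→ₗ[ℝ] ℝ

/-- The basic form `dx_{i₁} ∧ ⋯ ∧ dx_{i_k}` on `ℝⁿ`, for indices `idx`. -/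
noncomputable def dxW {n k : ℕ} (idx : Fin k → Fin n) : Form n k :=
  (Matrix.detRowAlternating).compLinearMap
    (LinearMap.pi fun i => EuclideanSpace.projₗ (idx i))

/-- Wedge product of constant-coefficient forms on `ℝⁿ`. -/
noncomputable def wedge {n k l : ℕ} (α : Form n k) (β : Form n l) : Form n (k + l) :=
  ((TensorProduct.lid ℝ ℝ).toLinearMap.compAlternatingMap
    (α.domCoprod β)).domDomCongr finSumFinEquiv

/-- The Euclidean inner product on `k`-forms on `ℝⁿ`. -/
noncomputable def formInner {n k : ℕ} (α β : Form n k) : ℝ :=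
  ((Nat.factorial k : ℝ))⁻¹ *
    ∑ f : Fin k → Fin n,
      α (fun i => EuclideanSpace.single (f i) 1) * β (fun i => EuclideanSpace.single (f i) 1)

/-- The standard volume form `dx₁ ∧ ⋯ ∧ dxₙ` on `ℝⁿ`. -/
noncomputable def vol (n : ℕ) : Form n n := dxW (fun i => i)

/-- The standard G₂ 3-form `φ₀ = dx₁₂₃ + dx₁₄₅ + dx₁₆₇ + dx₂₄₆ − dx₂₅₇ − dx₃₄₇ − dx₃₅₆`
on `ℝ⁷` (indices here are 0-based: paper index `i` is `i-1`). -/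
noncomputable def phi0 : Form 7 3 :=
  dxW ![0, 1, 2] + dxW ![0, 3, 4] + dxW ![0, 5, 6] + dxW ![1, 3, 5]
    - dxW ![1, 4, 6] - dxW ![2, 3, 6] - dxW ![2, 4, 5]

/-- The 4-form `*φ₀ = dx₄₅₆₇ + dx₂₃₆₇ + dx₂₃₄₅ + dx₁₃₅₇ − dx₁₃₄₆ − dx₁₂₅₆ − dx₁₂₄₇`
on `ℝ⁷` (0-based indices), the Hodge dual of `φ₀`. -/
noncomputable def psi0 : Form 7 4 :=
  dxW ![3, 4, 5, 6] + dxW ![1, 2, 5, 6] + dxW ![1, 2, 3, 4] + dxW ![0, 2, 4, 6]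
    - dxW ![0, 2, 3, 5] - dxW ![0, 1, 4, 5] - dxW ![0, 1, 3, 6]


open scoped RealInnerProductSpace

section Aux

noncomputable def toE (f : Fin 7 → ℝ) : E 7 := (WithLp.equiv 2 (Fin 7 → ℝ)).symm f

@[simp] lemma toE_apply (f : Fin 7 → ℝ) (i : Fin 7) : toE f i = f i := rfl

section VecEval
variable {α : Type*}
@[simp] lemma v3e0 (a b c : α) : ![a,b,c] 0 = a := rfl
@[simp] lemma v3e1 (a b c : α) : ![a,b,c] 1 = b := rfl
@[simp] lemma v3e2 (a b c : α) : ![a,b,c] 2 = c := rfl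
@[simp] lemma v4e0 (a b c d : α) : ![a,b,c,d] 0 = a := rfl
@[simp] lemma v4e1 (a b c d : α) : ![a,b,c,d] 1 = b := rfl
@[simp] lemma v4e2 (a b c d : α) : ![a,b,c,d] 2 = c := rfl
@[simp] lemma v4e3 (a b c d : α) : ![a,b,c,d] 3 = d := rfl
@[simp] lemma v7e0 (a b c d e f g : α) : ![a,b,c,d,e,f,g] 0 = a := rfl
@[simp] lemma v7e1 (a b c d e f g : α) : ![a,b,c,d,e,f,g] 1 = b := rfl
@[simp] lemma v7e2 (a b c d e f g : α) : ![a,b,c,d,e,f,g] 2 = c := rfl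
@[simp] lemma v7e3 (a b c d e f g : α) : ![a,b,c,d,e,f,g] 3 = d := rfl
@[simp] lemma v7e4 (a b c d e f g : α) : ![a,b,c,d,e,f,g] 4 = e := rfl
@[simp] lemma v7e5 (a b c d e f g : α) : ![a,b,c,d,e,f,g] 5 = f := rfl
@[simp] lemma v7e6 (a b c d e f g : α) : ![a,b,c,d,e,f,g] 6 = g := rfl
end VecEval

theorem det_fin_four' (A : Matrix (Fin 4) (Fin 4) ℝ) :
    A.det =
      A 0 0 * (A 1 1 * A 2 2 * A 3 3 - A 1 1 * A 2 3 * A 3 2 - A 1 2 * A 2 1 * A 3 3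
        + A 1 2 * A 2 3 * A 3 1 + A 1 3 * A 2 1 * A 3 2 - A 1 3 * A 2 2 * A 3 1)
      - A 0 1 * (A 1 0 * A 2 2 * A 3 3 - A 1 0 * A 2 3 * A 3 2 - A 1 2 * A 2 0 * A 3 3
        + A 1 2 * A 2 3 * A 3 0 + A 1 3 * A 2 0 * A 3 2 - A 1 3 * A 2 2 * A 3 0)
      + A 0 2 * (A 1 0 * A 2 1 * A 3 3 - A 1 0 * A 2 3 * A 3 1 - A 1 1 * A 2 0 * A 3 3
        + A 1 1 * A 2 3 * A 3 0 + A 1 3 * A 2 0 * A 3 1 - A 1 3 * A 2 1 * A 3 0)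
      - A 0 3 * (A 1 0 * A 2 1 * A 3 2 - A 1 0 * A 2 2 * A 3 1 - A 1 1 * A 2 0 * A 3 2
        + A 1 1 * A 2 2 * A 3 0 + A 1 2 * A 2 0 * A 3 1 - A 1 2 * A 2 1 * A 3 0) := by
  rw [Matrix.det_succ_row_zero, Fin.sum_univ_four]
  simp (config := { decide := true }) [Matrix.det_fin_three, Matrix.submatrix_apply,
    Fin.succAbove, Fin.lt_def, show (Fin.succ 2 : Fin 4) = 3 from rfl,
    show (Fin.castSucc 2 : Fin 4) = 2 from rfl, show (Fin.castSucc 1 : Fin 4) = 1 from rfl,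
    show (Fin.castSucc 0 : Fin 4) = 0 from rfl]
  ring

lemma dxW_apply {k : ℕ} (idx : Fin k → Fin 7) (v : Fin k → E 7) :
    dxW idx v = Matrix.det (Matrix.of fun i j => v i (idx j)) := rfl

lemma inner7 (x y : E 7) : ⟪x, y⟫ =
    x 0 * y 0 + x 1 * y 1 + x 2 * y 2 + x 3 * y 3 + x 4 * y 4 + x 5 * y 5 + x 6 * y 6 := by
  simp [PiLp.inner_apply, RCLike.inner_apply, Fin.sum_univ_seven, mul_comm]

lemma phi0_apply (u v w : E 7) : phi0 ![u, v, w] =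
    u 0*v 1*w 2 - u 0*v 2*w 1 + u 0*v 3*w 4 - u 0*v 4*w 3 + u 0*v 5*w 6 - u 0*v 6*w 5 - u 1*v 0*w 2 + u 1*v 2*w 0 + u 1*v 3*w 5 - u 1*v 4*w 6 - u 1*v 5*w 3 + u 1*v 6*w 4 + u 2*v 0*w 1 - u 2*v 1*w 0 - u 2*v 3*w 6 - u 2*v 4*w 5 + u 2*v 5*w 4 + u 2*v 6*w 3 - u 3*v 0*w 4 - u 3*v 1*w 5 + u 3*v 2*w 6 + u 3*v 4*w 0 + u 3*v 5*w 1 - u 3*v 6*w 2 + u 4*v 0*w 3 + u 4*v 1*w 6 + u 4*v 2*w 5 - u 4*v 3*w 0 - u 4*v 5*w 2 - u 4*v 6*w 1 - u 5*v 0*w 6 + u 5*v 1*w 3 - u 5*v 2*w 4 - u 5*v 3*w 1 + u 5*v 4*w 2 + u 5*v 6*w 0 + u 6*v 0*w 5 - u 6*v 1*w 4 - u 6*v 2*w 3 + u 6*v 3*w 2 + u 6*v 4*w 1 - u 6*v 5*w 0 := by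
  simp only [phi0, AlternatingMap.sub_apply, AlternatingMap.add_apply, dxW_apply,
    Matrix.det_fin_three, Matrix.of_apply, v3e0, v3e1, v3e2]
  ring

lemma psi0_apply (v : Fin 4 → E 7) : psi0 v =
    -v 0 0*v 1 1*v 2 3*v 3 6 - v 0 0*v 1 1*v 2 4*v 3 5 + v 0 0*v 1 1*v 2 5*v 3 4 + v 0 0*v 1 1*v 2 6*v 3 3 - v 0 0*v 1 2*v 2 3*v 3 5 + v 0 0*v 1 2*v 2 4*v 3 6 + v 0 0*v 1 2*v 2 5*v 3 3 - v 0 0*v 1 2*v 2 6*v 3 4 + v 0 0*v 1 3*v 2 1*v 3 6 + v 0 0*v 1 3*v 2 2*v 3 5 - v 0 0*v 1 3*v 2 5*v 3 2 - v 0 0*v 1 3*v 2 6*v 3 1 + v 0 0*v 1 4*v 2 1*v 3 5 - v 0 0*v 1 4*v 2 2*v 3 6 - v 0 0*v 1 4*v 2 5*v 3 1 + v 0 0*v 1 4*v 2 6*v 3 2 - v 0 0*v 1 5*v 2 1*v 3 4 - v 0 0*v 1 5*v 2 2*v 3 3 + v 0 0*v 1 5*v 2 3*v 3 2 + v 0 0*v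 1 5*v 2 4*v 3 1 - v 0 0*v 1 6*v 2 1*v 3 3 + v 0 0*v 1 6*v 2 2*v 3 4 + v 0 0*v 1 6*v 2 3*v 3 1 - v 0 0*v 1 6*v 2 4*v 3 2 + v 0 1*v 1 0*v 2 3*v 3 6 + v 0 1*v 1 0*v 2 4*v 3 5 - v 0 1*v 1 0*v 2 5*v 3 4 - v 0 1*v 1 0*v 2 6*v 3 3 + v 0 1*v 1 2*v 2 3*v 3 4 - v 0 1*v 1 2*v 2 4*v 3 3 + v 0 1*v 1 2*v 2 5*v 3 6 - v 0 1*v 1 2*v 2 6*v 3 5 - v 0 1*v 1 3*v 2 0*v 3 6 - v 0 1*v 1 3*v 2 2*v 3 4 + v 0 1*v 1 3*v 2 4*v 3 2 + v 0 1*v 1 3*v 2 6*v 3 0 - v 0 1*v 1 4*v 2 0*v 3 5 + v 0 1*v 1 4*v 2 2*v 3 3 - v 0 1*v 1 4*v 2 3*v 3 2 + v 0 1*v 1 4*v 2 5*v 3 0 + v 0 1*v 1 5*v 2 0*v 3 4 - v 0 1*v 1 5*v 2 2*v 3 6 - v 0 1*v 1 5*v 2 4*v 3 0 + v 0 1*v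 1 5*v 2 6*v 3 2 + v 0 1*v 1 6*v 2 0*v 3 3 + v 0 1*v 1 6*v 2 2*v 3 5 - v 0 1*v 1 6*v 2 3*v 3 0 - v 0 1*v 1 6*v 2 5*v 3 2 + v 0 2*v 1 0*v 2 3*v 3 5 - v 0 2*v 1 0*v 2 4*v 3 6 - v 0 2*v 1 0*v 2 5*v 3 3 + v 0 2*v 1 0*v 2 6*v 3 4 - v 0 2*v 1 1*v 2 3*v 3 4 + v 0 2*v 1 1*v 2 4*v 3 3 - v 0 2*v 1 1*v 2 5*v 3 6 + v 0 2*v 1 1*v 2 6*v 3 5 - v 0 2*v 1 3*v 2 0*v 3 5 + v 0 2*v 1 3*v 2 1*v 3 4 - v 0 2*v 1 3*v 2 4*v 3 1 + v 0 2*v 1 3*v 2 5*v 3 0 + v 0 2*v 1 4*v 2 0*v 3 6 - v 0 2*v 1 4*v 2 1*v 3 3 + v 0 2*v 1 4*v 2 3*v 3 1 - v 0 2*v 1 4*v 2 6*v 3 0 + v 0 2*v 1 5*v 2 0*v 3 3 + v 0 2*v 1 5*v 2 1*v 3 6 - v 0 2*v 1 5*v 2 3*v 3 0 - v 0 2*v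 1 5*v 2 6*v 3 1 - v 0 2*v 1 6*v 2 0*v 3 4 - v 0 2*v 1 6*v 2 1*v 3 5 + v 0 2*v 1 6*v 2 4*v 3 0 + v 0 2*v 1 6*v 2 5*v 3 1 - v 0 3*v 1 0*v 2 1*v 3 6 - v 0 3*v 1 0*v 2 2*v 3 5 + v 0 3*v 1 0*v 2 5*v 3 2 + v 0 3*v 1 0*v 2 6*v 3 1 + v 0 3*v 1 1*v 2 0*v 3 6 + v 0 3*v 1 1*v 2 2*v 3 4 - v 0 3*v 1 1*v 2 4*v 3 2 - v 0 3*v 1 1*v 2 6*v 3 0 + v 0 3*v 1 2*v 2 0*v 3 5 - v 0 3*v 1 2*v 2 1*v 3 4 + v 0 3*v 1 2*v 2 4*v 3 1 - v 0 3*v 1 2*v 2 5*v 3 0 + v 0 3*v 1 4*v 2 1*v 3 2 - v 0 3*v 1 4*v 2 2*v 3 1 + v 0 3*v 1 4*v 2 5*v 3 6 - v 0 3*v 1 4*v 2 6*v 3 5 - v 0 3*v 1 5*v 2 0*v 3 2 + v 0 3*v 1 5*v 2 2*v 3 0 - v 0 3*v 1 5*v 2 4*v 3 6 + v 0 3*v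 1 5*v 2 6*v 3 4 - v 0 3*v 1 6*v 2 0*v 3 1 + v 0 3*v 1 6*v 2 1*v 3 0 + v 0 3*v 1 6*v 2 4*v 3 5 - v 0 3*v 1 6*v 2 5*v 3 4 - v 0 4*v 1 0*v 2 1*v 3 5 + v 0 4*v 1 0*v 2 2*v 3 6 + v 0 4*v 1 0*v 2 5*v 3 1 - v 0 4*v 1 0*v 2 6*v 3 2 + v 0 4*v 1 1*v 2 0*v 3 5 - v 0 4*v 1 1*v 2 2*v 3 3 + v 0 4*v 1 1*v 2 3*v 3 2 - v 0 4*v 1 1*v 2 5*v 3 0 - v 0 4*v 1 2*v 2 0*v 3 6 + v 0 4*v 1 2*v 2 1*v 3 3 - v 0 4*v 1 2*v 2 3*v 3 1 + v 0 4*v 1 2*v 2 6*v 3 0 - v 0 4*v 1 3*v 2 1*v 3 2 + v 0 4*v 1 3*v 2 2*v 3 1 - v 0 4*v 1 3*v 2 5*v 3 6 + v 0 4*v 1 3*v 2 6*v 3 5 - v 0 4*v 1 5*v 2 0*v 3 1 + v 0 4*v 1 5*v 2 1*v 3 0 + v 0 4*v 1 5*v 2 3*v 3 6 - v 0 4*v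 1 5*v 2 6*v 3 3 + v 0 4*v 1 6*v 2 0*v 3 2 - v 0 4*v 1 6*v 2 2*v 3 0 - v 0 4*v 1 6*v 2 3*v 3 5 + v 0 4*v 1 6*v 2 5*v 3 3 + v 0 5*v 1 0*v 2 1*v 3 4 + v 0 5*v 1 0*v 2 2*v 3 3 - v 0 5*v 1 0*v 2 3*v 3 2 - v 0 5*v 1 0*v 2 4*v 3 1 - v 0 5*v 1 1*v 2 0*v 3 4 + v 0 5*v 1 1*v 2 2*v 3 6 + v 0 5*v 1 1*v 2 4*v 3 0 - v 0 5*v 1 1*v 2 6*v 3 2 - v 0 5*v 1 2*v 2 0*v 3 3 - v 0 5*v 1 2*v 2 1*v 3 6 + v 0 5*v 1 2*v 2 3*v 3 0 + v 0 5*v 1 2*v 2 6*v 3 1 + v 0 5*v 1 3*v 2 0*v 3 2 - v 0 5*v 1 3*v 2 2*v 3 0 + v 0 5*v 1 3*v 2 4*v 3 6 - v 0 5*v 1 3*v 2 6*v 3 4 + v 0 5*v 1 4*v 2 0*v 3 1 - v 0 5*v 1 4*v 2 1*v 3 0 - v 0 5*v 1 4*v 2 3*v 3 6 + v 0 5*v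 1 4*v 2 6*v 3 3 + v 0 5*v 1 6*v 2 1*v 3 2 - v 0 5*v 1 6*v 2 2*v 3 1 + v 0 5*v 1 6*v 2 3*v 3 4 - v 0 5*v 1 6*v 2 4*v 3 3 + v 0 6*v 1 0*v 2 1*v 3 3 - v 0 6*v 1 0*v 2 2*v 3 4 - v 0 6*v 1 0*v 2 3*v 3 1 + v 0 6*v 1 0*v 2 4*v 3 2 - v 0 6*v 1 1*v 2 0*v 3 3 - v 0 6*v 1 1*v 2 2*v 3 5 + v 0 6*v 1 1*v 2 3*v 3 0 + v 0 6*v 1 1*v 2 5*v 3 2 + v 0 6*v 1 2*v 2 0*v 3 4 + v 0 6*v 1 2*v 2 1*v 3 5 - v 0 6*v 1 2*v 2 4*v 3 0 - v 0 6*v 1 2*v 2 5*v 3 1 + v 0 6*v 1 3*v 2 0*v 3 1 - v 0 6*v 1 3*v 2 1*v 3 0 - v 0 6*v 1 3*v 2 4*v 3 5 + v 0 6*v 1 3*v 2 5*v 3 4 - v 0 6*v 1 4*v 2 0*v 3 2 + v 0 6*v 1 4*v 2 2*v 3 0 + v 0 6*v 1 4*v 2 3*v 3 5 - v 0 6*v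 1 4*v 2 5*v 3 3 - v 0 6*v 1 5*v 2 1*v 3 2 + v 0 6*v 1 5*v 2 2*v 3 1 - v 0 6*v 1 5*v 2 3*v 3 4 + v 0 6*v 1 5*v 2 4*v 3 3 := by
  simp only [psi0, AlternatingMap.sub_apply, AlternatingMap.add_apply, dxW_apply,
    det_fin_four', Matrix.of_apply, v4e0, v4e1, v4e2, v4e3]
  ring

noncomputable def crossV (u v : E 7) : E 7 := toE ![
  u 1*v 2 - u 2*v 1 + u 3*v 4 - u 4*v 3 + u 5*v 6 - u 6*v 5,
  -u 0*v 2 + u 2*v 0 + u 3*v 5 - u 4*v 6 - u 5*v 3 + u 6*v 4,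
  u 0*v 1 - u 1*v 0 - u 3*v 6 - u 4*v 5 + u 5*v 4 + u 6*v 3,
  -u 0*v 4 - u 1*v 5 + u 2*v 6 + u 4*v 0 + u 5*v 1 - u 6*v 2,
  u 0*v 3 + u 1*v 6 + u 2*v 5 - u 3*v 0 - u 5*v 2 - u 6*v 1,
  -u 0*v 6 + u 1*v 3 - u 2*v 4 - u 3*v 1 + u 4*v 2 + u 6*v 0,
  u 0*v 5 - u 1*v 4 - u 2*v 3 + u 3*v 2 + u 4*v 1 - u 5*v 0]

noncomputable def chiV (x y z : E 7) : E 7 := toE ![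
  x 1*y 3*z 6 + x 1*y 4*z 5 - x 1*y 5*z 4 - x 1*y 6*z 3 + x 2*y 3*z 5 - x 2*y 4*z 6 - x 2*y 5*z 3 + x 2*y 6*z 4 - x 3*y 1*z 6 - x 3*y 2*z 5 + x 3*y 5*z 2 + x 3*y 6*z 1 - x 4*y 1*z 5 + x 4*y 2*z 6 + x 4*y 5*z 1 - x 4*y 6*z 2 + x 5*y 1*z 4 + x 5*y 2*z 3 - x 5*y 3*z 2 - x 5*y 4*z 1 + x 6*y 1*z 3 - x 6*y 2*z 4 - x 6*y 3*z 1 + x 6*y 4*z 2,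
  -x 0*y 3*z 6 - x 0*y 4*z 5 + x 0*y 5*z 4 + x 0*y 6*z 3 - x 2*y 3*z 4 + x 2*y 4*z 3 - x 2*y 5*z 6 + x 2*y 6*z 5 + x 3*y 0*z 6 + x 3*y 2*z 4 - x 3*y 4*z 2 - x 3*y 6*z 0 + x 4*y 0*z 5 - x 4*y 2*z 3 + x 4*y 3*z 2 - x 4*y 5*z 0 - x 5*y 0*z 4 + x 5*y 2*z 6 + x 5*y 4*z 0 - x 5*y 6*z 2 - x 6*y 0*z 3 - x 6*y 2*z 5 + x 6*y 3*z 0 + x 6*y 5*z 2,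
  -x 0*y 3*z 5 + x 0*y 4*z 6 + x 0*y 5*z 3 - x 0*y 6*z 4 + x 1*y 3*z 4 - x 1*y 4*z 3 + x 1*y 5*z 6 - x 1*y 6*z 5 + x 3*y 0*z 5 - x 3*y 1*z 4 + x 3*y 4*z 1 - x 3*y 5*z 0 - x 4*y 0*z 6 + x 4*y 1*z 3 - x 4*y 3*z 1 + x 4*y 6*z 0 - x 5*y 0*z 3 - x 5*y 1*z 6 + x 5*y 3*z 0 + x 5*y 6*z 1 + x 6*y 0*z 4 + x 6*y 1*z 5 - x 6*y 4*z 0 - x 6*y 5*z 1,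
  x 0*y 1*z 6 + x 0*y 2*z 5 - x 0*y 5*z 2 - x 0*y 6*z 1 - x 1*y 0*z 6 - x 1*y 2*z 4 + x 1*y 4*z 2 + x 1*y 6*z 0 - x 2*y 0*z 5 + x 2*y 1*z 4 - x 2*y 4*z 1 + x 2*y 5*z 0 - x 4*y 1*z 2 + x 4*y 2*z 1 - x 4*y 5*z 6 + x 4*y 6*z 5 + x 5*y 0*z 2 - x 5*y 2*z 0 + x 5*y 4*z 6 - x 5*y 6*z 4 + x 6*y 0*z 1 - x 6*y 1*z 0 - x 6*y 4*z 5 + x 6*y 5*z 4,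
  x 0*y 1*z 5 - x 0*y 2*z 6 - x 0*y 5*z 1 + x 0*y 6*z 2 - x 1*y 0*z 5 + x 1*y 2*z 3 - x 1*y 3*z 2 + x 1*y 5*z 0 + x 2*y 0*z 6 - x 2*y 1*z 3 + x 2*y 3*z 1 - x 2*y 6*z 0 + x 3*y 1*z 2 - x 3*y 2*z 1 + x 3*y 5*z 6 - x 3*y 6*z 5 + x 5*y 0*z 1 - x 5*y 1*z 0 - x 5*y 3*z 6 + x 5*y 6*z 3 - x 6*y 0*z 2 + x 6*y 2*z 0 + x 6*y 3*z 5 - x 6*y 5*z 3,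
  -x 0*y 1*z 4 - x 0*y 2*z 3 + x 0*y 3*z 2 + x 0*y 4*z 1 + x 1*y 0*z 4 - x 1*y 2*z 6 - x 1*y 4*z 0 + x 1*y 6*z 2 + x 2*y 0*z 3 + x 2*y 1*z 6 - x 2*y 3*z 0 - x 2*y 6*z 1 - x 3*y 0*z 2 + x 3*y 2*z 0 - x 3*y 4*z 6 + x 3*y 6*z 4 - x 4*y 0*z 1 + x 4*y 1*z 0 + x 4*y 3*z 6 - x 4*y 6*z 3 - x 6*y 1*z 2 + x 6*y 2*z 1 - x 6*y 3*z 4 + x 6*y 4*z 3,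
  -x 0*y 1*z 3 + x 0*y 2*z 4 + x 0*y 3*z 1 - x 0*y 4*z 2 + x 1*y 0*z 3 + x 1*y 2*z 5 - x 1*y 3*z 0 - x 1*y 5*z 2 - x 2*y 0*z 4 - x 2*y 1*z 5 + x 2*y 4*z 0 + x 2*y 5*z 1 - x 3*y 0*z 1 + x 3*y 1*z 0 + x 3*y 4*z 5 - x 3*y 5*z 4 + x 4*y 0*z 2 - x 4*y 2*z 0 - x 4*y 3*z 5 + x 4*y 5*z 3 + x 5*y 1*z 2 - x 5*y 2*z 1 + x 5*y 3*z 4 - x 5*y 4*z 3]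

lemma inner_crossV (u v w : E 7) : ⟪crossV u v, w⟫ = phi0 ![u, v, w] := by
  rw [phi0_apply, inner7]
  simp only [crossV, toE_apply, v7e0, v7e1, v7e2, v7e3, v7e4, v7e5, v7e6]
  ring

lemma inner_chiV (x y z w : E 7) : ⟪chiV x y z, w⟫ = psi0 ![x, y, z, w] := by
  rw [psi0_apply, inner7]
  simp only [chiV, toE_apply, v7e0, v7e1, v7e2, v7e3, v7e4, v7e5, v7e6, v4e0, v4e1, v4e2, v4e3]
  ring

lemma inner_crossV_crossV (a b c : E 7) :
    ⟪crossV a b, crossV a c⟫ = ⟪a,a⟫ * ⟪b,c⟫ - ⟪a,b⟫ * ⟪a,c⟫ := by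
  simp only [inner7, crossV, toE_apply, v7e0, v7e1, v7e2, v7e3, v7e4, v7e5, v7e6]
  ring

lemma inner_chiV_chiV (x y z : E 7) :
    ⟪chiV x y z, chiV x y z⟫ =
      (⟪x,x⟫ * (⟪y,y⟫ * ⟪z,z⟫ - ⟪y,z⟫ * ⟪y,z⟫)
        - ⟪x,y⟫ * (⟪x,y⟫ * ⟪z,z⟫ - ⟪y,z⟫ * ⟪x,z⟫)
        + ⟪x,z⟫ * (⟪x,y⟫ * ⟪y,z⟫ - ⟪y,y⟫ * ⟪x,z⟫))
      - phi0 ![x, y, z] * phi0 ![x, y, z] := by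
  rw [phi0_apply]
  simp only [inner7, chiV, toE_apply, v7e0, v7e1, v7e2, v7e3, v7e4, v7e5, v7e6]
  ring

lemma inner_chiV_crossV (x y z w : E 7) :
    ⟪chiV x y z, crossV x w⟫ =
      -(⟪x,x⟫ * phi0 ![y, z, w]) + ⟪x,y⟫ * phi0 ![x, z, w]
        - ⟪x,z⟫ * phi0 ![x, y, w] + ⟪x,w⟫ * phi0 ![x, y, z] := by
  simp only [phi0_apply, inner7, chiV, crossV, toE_apply, v7e0, v7e1, v7e2, v7e3, v7e4, v7e5,
    v7e6]
  ring

end Aux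

/-- If `P` is a 4-dimensional subspace of `ℝ⁷` on which `φ₀` vanishes
identically (a coassociative 4-plane), then `*φ₀` restricts to a nonvanishing 4-form on
`P`: it is nonzero on every basis of `P` (in particular it induces an orientation on `P`). -/
theorem coassociative_plane_calibrated
    (P : Submodule ℝ (E 7)) (hP : Module.finrank ℝ P = 4)
    (hco : ∀ u v w : E 7, u ∈ P → v ∈ P → w ∈ P → phi0 ![u, v, w] = 0) :
    ∀ b : Module.Basis (Fin 4) ℝ P, psi0 (fun i => (b i : E 7)) ≠ 0 := by
  intro b
  classical
  haveI : FiniteDimensional ℝ P := FiniteDimensional.finiteDimensional_submodule P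
  let e : OrthonormalBasis (Fin 4) ℝ P := (stdOrthonormalBasis ℝ P).reindex (finCongr hP)
  set Ψ : P [⋀^Fin 4]→ₗ[ℝ] ℝ := psi0.compLinearMap P.subtype with hΨdef
  have hb : psi0 (fun i => (b i : E 7)) = Ψ ⇑b := rfl
  -- the coerced orthonormal vectors
  set x : Fin 4 → E 7 := fun i => ((e i : P) : E 7) with hxdef
  have hxP : ∀ i, x i ∈ P := fun i => (e i : P).2
  have hxx : ∀ i j, ⟪x i, x j⟫ = if i = j then 1 else 0 := by
    intro i j
    have := orthonormal_iff_ite.mp e.orthonormal i j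
    rwa [Submodule.coe_inner] at this
  have hphi : ∀ u v w : E 7, u ∈ P → v ∈ P → w ∈ P → phi0 ![u, v, w] = 0 := hco
  set f : Fin 3 → E 7 := fun j => crossV (x 0) (x j.succ) with hfdef
  have hfx : ∀ (j : Fin 3) (i : Fin 4), ⟪f j, x i⟫ = 0 := by
    intro j i
    rw [hfdef]
    simp only []
    rw [inner_crossV]
    exact hphi _ _ _ (hxP 0) (hxP j.succ) (hxP i)
  have hxf : ∀ (i : Fin 4) (j : Fin 3), ⟪x i, f j⟫ = 0 := by
    intro i j
    rw [real_inner_comm]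
    exact hfx j i
  have hff : ∀ i j : Fin 3, ⟪f i, f j⟫ = if i = j then 1 else 0 := by
    intro i j
    rw [hfdef]
    simp only []
    rw [inner_crossV_crossV]
    simp only [hxx, Fin.succ_inj]
    have h1 : ¬ ((0 : Fin 4) = i.succ) := fun h => Fin.succ_ne_zero i h.symm
    have h2 : ¬ ((0 : Fin 4) = j.succ) := fun h => Fin.succ_ne_zero j h.symm
    simp [h1, h2]
  set χ : E 7 := chiV (x 0) (x 1) (x 2) with hχdef
  have hχx : ∀ i : Fin 4, i ≠ 3 → ⟪χ, x i⟫ = 0 := by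
    intro i hi
    rw [hχdef, inner_chiV]
    fin_cases i
    · exact psi0.map_eq_zero_of_eq _ (show ![x 0, x 1, x 2, x 0] 0 = ![x 0, x 1, x 2, x 0] 3 from rfl) (by decide)
    · exact psi0.map_eq_zero_of_eq _ (show ![x 0, x 1, x 2, x 1] 1 = ![x 0, x 1, x 2, x 1] 3 from rfl) (by decide)
    · exact psi0.map_eq_zero_of_eq _ (show ![x 0, x 1, x 2, x 2] 2 = ![x 0, x 1, x 2, x 2] 3 from rfl) (by decide)
    · exact absurd rfl hi
  have hχf : ∀ j : Fin 3, ⟪χ, f j⟫ = 0 := by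
    intro j
    rw [hχdef, hfdef]
    simp only []
    rw [inner_chiV_crossV]
    rw [hphi _ _ _ (hxP 1) (hxP 2) (hxP j.succ), hphi _ _ _ (hxP 0) (hxP 2) (hxP j.succ),
      hphi _ _ _ (hxP 0) (hxP 1) (hxP j.succ), hphi _ _ _ (hxP 0) (hxP 1) (hxP 2)]
    ring
  have hχχ : ⟪χ, χ⟫ = 1 := by
    rw [hχdef, inner_chiV_chiV, hxx, hxx, hxx, hxx, hxx, hxx,
      hphi _ _ _ (hxP 0) (hxP 1) (hxP 2)]
    norm_num [show ((1 : Fin 4) = 2) = False from by decide,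
      show ((0 : Fin 4) = 2) = False from by decide, show ((0 : Fin 4) = 1) = False from by decide]
  -- the orthonormal 7-frame
  set g : Fin 7 → E 7 := ![x 0, x 1, x 2, x 3, f 0, f 1, f 2] with hgdef
  have hg : Orthonormal ℝ g := by
    rw [orthonormal_iff_ite]
    intro i j
    fin_cases i <;> fin_cases j <;>
      simp (config := { decide := true }) [hgdef, hxx, hxf, hfx, hff, -inner_self_eq_norm_sq_to_K]
  have hcard : Fintype.card (Fin 7) = Module.finrank ℝ (E 7) := by
    simp [finrank_euclideanSpace_fin]
  let B : Module.Basis (Fin 7) ℝ (E 7) := basisOfLinearIndependentOfCardEqFinrank hg.linearIndependent hcard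
  have hBg : ⇑B = g := coe_basisOfLinearIndependentOfCardEqFinrank _ _
  let OB : OrthonormalBasis (Fin 7) ℝ (E 7) := B.toOrthonormalBasis (by rwa [hBg])
  have hOB : ∀ i, OB i = g i := by
    intro i
    have : ⇑OB = ⇑B := Module.Basis.coe_toOrthonormalBasis _ _
    rw [this, hBg]
  have parseval := OB.sum_inner_mul_inner χ χ
  rw [Fin.sum_univ_seven] at parseval
  rw [hOB 0, hOB 1, hOB 2, hOB 3, hOB 4, hOB 5, hOB 6] at parseval
  have hg0 : g 0 = x 0 := rfl
  have hg1 : g 1 = x 1 := rfl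
  have hg2 : g 2 = x 2 := rfl
  have hg3 : g 3 = x 3 := rfl
  have hg4 : g 4 = f 0 := rfl
  have hg5 : g 5 = f 1 := rfl
  have hg6 : g 6 = f 2 := rfl
  rw [hg0, hg1, hg2, hg3, hg4, hg5, hg6] at parseval
  rw [hχx 0 (by decide), hχx 1 (by decide), hχx 2 (by decide), hχf 0, hχf 1, hχf 2, hχχ]
    at parseval
  have hkey : ⟪χ, x 3⟫ ≠ 0 := by
    intro h
    rw [h] at parseval
    norm_num at parseval
  -- identify ⟪χ, x 3⟫ with Ψ applied to the orthonormal basis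
  have hxfam : (fun i => x i) = ![x 0, x 1, x 2, x 3] := by
    funext i; fin_cases i <;> rfl
  have hΨe : Ψ ⇑e.toBasis = ⟪χ, x 3⟫ := by
    rw [hχdef, inner_chiV]
    have : Ψ ⇑e.toBasis = psi0 fun i => x i := by
      rw [hΨdef]
      simp only [AlternatingMap.compLinearMap_apply, Submodule.coe_subtype,
        OrthonormalBasis.coe_toBasis]
      rfl
    rw [this, hxfam]
  have hΨe' : Ψ ⇑e.toBasis ≠ 0 := by rw [hΨe]; exact hkey
  have hdet := Ψ.eq_smul_basis_det e.toBasis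
  have hdetb : Ψ ⇑b = Ψ ⇑e.toBasis * e.toBasis.det ⇑b := by
    conv_lhs => rw [hdet]
    simp [smul_eq_mul]
  rw [hb, hdetb]
  exact mul_ne_zero hΨe' (e.toBasis.isUnit_det b).ne_zero
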